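/- arXiv:2402.16681 — 2 statements merged into one kernel-verified Lean document; each statement's English description precedes it below -/
import Mathlib

section
/- Let μ_S, μ_T be probability measures on ℝ^d with finite first moments, f : ℝ^d → [0,1] a labeling function, and H a set of hypotheses h : ℝ^d → ℝ such that every h ∈ H and f are A-Lipschitz. Define ε_μ(h) = E_{x∼μ}|h(x) − f(x)|. Then for every h ∈ H, ε_{μ_T}(h) ≤ ε_{μ_S}(h) + 2A · W₁(μ_S, μ_T). -/
open MeasureTheory

/-- The 1-Wasserstein distance: infimum over couplings of the expected distance. -/
noncomputable def W1 {d : ℕ} (μ ν : Measure (EuclideanSpace ℝ (Fin d))) : ℝ :=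
  sInf { r : ℝ | ∃ γ : Measure (EuclideanSpace ℝ (Fin d) × EuclideanSpace ℝ (Fin d)),
    γ.map Prod.fst = μ ∧ γ.map Prod.snd = ν ∧ r = ∫ p, ‖p.1 - p.2‖ ∂γ }

lemma coupling_key {E : Type*} [NormedAddCommGroup E] [MeasurableSpace E] [BorelSpace E]
    [SecondCountableTopology E]
    (B : ℝ) (μS μT : Measure E)
    [IsProbabilityMeasure μS] [IsProbabilityMeasure μT]
    (hμS : Integrable (fun x => ‖x‖) μS) (hμT : Integrable (fun x => ‖x‖) μT)
    (g : E → ℝ) (hgLip : ∀ x y, |g x - g y| ≤ B * ‖x - y‖)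
    (γ : Measure (E × E)) (h1 : γ.map Prod.fst = μS) (h2 : γ.map Prod.snd = μT) :
    (∫ x, g x ∂μT) ≤ (∫ x, g x ∂μS) + B * ∫ p, ‖p.1 - p.2‖ ∂γ := by
  -- g is Lipschitz with constant |B| hence continuous
  have hgLip' : LipschitzWith (Real.toNNReal |B|) g := by
    apply LipschitzWith.of_dist_le_mul
    intro x y
    have h1' := hgLip x y
    have hle : B * ‖x - y‖ ≤ |B| * ‖x - y‖ :=
      mul_le_mul_of_nonneg_right (le_abs_self B) (norm_nonneg _)
    simp only [Real.dist_eq, dist_eq_norm]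
    calc |g x - g y| ≤ |B| * ‖x - y‖ := le_trans h1' hle
      _ = (Real.toNNReal |B|) * ‖x - y‖ := by rw [Real.coe_toNNReal _ (abs_nonneg B)]
  have hgc : Continuous g := hgLip'.continuous
  have hγprob : IsProbabilityMeasure γ := by
    constructor
    have h3 := congrArg (fun m : Measure E => m Set.univ) h1
    simp only [Measure.map_apply measurable_fst MeasurableSet.univ, Set.preimage_univ] at h3
    rw [h3]; exact measure_univ
  -- integrability of g w.r.t. a measure with finite first moment
  have hgint : ∀ (μ : Measure E), IsProbabilityMeasure μ → Integrable (fun x => ‖x‖) μ →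
      Integrable g μ := by
    intro μ _ hμ
    refine ((hμ.const_mul |B|).add (integrable_const |g 0|)).mono'
      hgc.aestronglyMeasurable ?_
    filter_upwards with x
    have h4 := hgLip x 0
    rw [sub_zero] at h4
    have h2' : |g x - g 0| ≤ |B| * ‖x‖ :=
      le_trans h4 (mul_le_mul_of_nonneg_right (le_abs_self B) (norm_nonneg _))
    calc ‖g x‖ = |g x| := rfl
      _ = |(g x - g 0) + g 0| := by ring_nf
      _ ≤ |g x - g 0| + |g 0| := abs_add_le _ _
      _ ≤ |B| * ‖x‖ + |g 0| := by linarith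
  have hgS : Integrable g μS := hgint μS inferInstance hμS
  have hgT : Integrable g μT := hgint μT inferInstance hμT
  have hgS' : Integrable g (γ.map Prod.fst) := h1 ▸ hgS
  have hgT' : Integrable g (γ.map Prod.snd) := h2 ▸ hgT
  have hint1 : Integrable (fun p : E × E => g p.1) γ :=
    (integrable_map_measure hgc.aestronglyMeasurable
      measurable_fst.aemeasurable (μ := γ)).mp hgS'
  have hint2 : Integrable (fun p : E × E => g p.2) γ :=
    (integrable_map_measure hgc.aestronglyMeasurable
      measurable_snd.aemeasurable (μ := γ)).mp hgT'
  have hμS' : Integrable (fun x : E => ‖x‖) (γ.map Prod.fst) := h1 ▸ hμS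
  have hμT' : Integrable (fun x : E => ‖x‖) (γ.map Prod.snd) := h2 ▸ hμT
  have hn1 : Integrable (fun p : E × E => ‖p.1‖) γ :=
    (integrable_map_measure continuous_norm.aestronglyMeasurable
      measurable_fst.aemeasurable (μ := γ)).mp hμS'
  have hn2 : Integrable (fun p : E × E => ‖p.2‖) γ :=
    (integrable_map_measure continuous_norm.aestronglyMeasurable
      measurable_snd.aemeasurable (μ := γ)).mp hμT'
  have hnorm : Integrable (fun p : E × E => ‖p.1 - p.2‖) γ := by
    refine (hn1.add hn2).mono'
      (Continuous.aestronglyMeasurable (by continuity)) ?_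
    filter_upwards with p
    simp only [norm_norm]
    exact norm_sub_le p.1 p.2
  have eT : ∫ x, g x ∂μT = ∫ p : E × E, g p.2 ∂γ := by
    rw [← h2, integral_map measurable_snd.aemeasurable hgc.aestronglyMeasurable]
  have eS : ∫ x, g x ∂μS = ∫ p : E × E, g p.1 ∂γ := by
    rw [← h1, integral_map measurable_fst.aemeasurable hgc.aestronglyMeasurable]
  rw [eT, eS]
  have hsub : ∫ p : E × E, (g p.2 - g p.1) ∂γ ≤ ∫ p : E × E, B * ‖p.1 - p.2‖ ∂γ := by
    apply integral_mono (hint2.sub hint1) (hnorm.const_mul B)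
    intro p
    calc g p.2 - g p.1 ≤ |g p.2 - g p.1| := le_abs_self _
      _ ≤ B * ‖p.2 - p.1‖ := hgLip p.2 p.1
      _ = B * ‖p.1 - p.2‖ := by rw [norm_sub_rev]
  rw [integral_sub hint2 hint1, integral_const_mul] at hsub
  linarith

theorem generalization_bound_W1 {d : ℕ} (A : ℝ)
    (μS μT : Measure (EuclideanSpace ℝ (Fin d)))
    [IsProbabilityMeasure μS] [IsProbabilityMeasure μT]
    (hμS : Integrable (fun x => ‖x‖) μS) (hμT : Integrable (fun x => ‖x‖) μT)
    (f : EuclideanSpace ℝ (Fin d) → ℝ)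
    (hf01 : ∀ x, f x ∈ Set.Icc (0 : ℝ) 1)
    (hfLip : ∀ x y, |f x - f y| ≤ A * ‖x - y‖)
    (H : Set (EuclideanSpace ℝ (Fin d) → ℝ))
    (hHLip : ∀ h ∈ H, ∀ x y, |h x - h y| ≤ A * ‖x - y‖) :
    ∀ h ∈ H,
      (∫ x, |h x - f x| ∂μT) ≤ (∫ x, |h x - f x| ∂μS) + 2 * A * W1 μS μT := by
  intro h hH
  set g : EuclideanSpace ℝ (Fin d) → ℝ := fun x => |h x - f x| with hgdef
  have hgLip : ∀ x y, |g x - g y| ≤ (2 * A) * ‖x - y‖ := by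
    intro x y
    calc |g x - g y| ≤ |(h x - f x) - (h y - f y)| := abs_abs_sub_abs_le_abs_sub _ _
      _ = |(h x - h y) - (f x - f y)| := by ring_nf
      _ ≤ |h x - h y| + |f x - f y| := abs_sub _ _
      _ ≤ A * ‖x - y‖ + A * ‖x - y‖ := add_le_add (hHLip h hH x y) (hfLip x y)
      _ = (2 * A) * ‖x - y‖ := by ring
  set S := { r : ℝ | ∃ γ : Measure (EuclideanSpace ℝ (Fin d) × EuclideanSpace ℝ (Fin d)),
    γ.map Prod.fst = μS ∧ γ.map Prod.snd = μT ∧ r = ∫ p, ‖p.1 - p.2‖ ∂γ } with hSdef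
  have key : ∀ r ∈ S, (∫ x, g x ∂μT) ≤ (∫ x, g x ∂μS) + 2 * A * r := by
    rintro r ⟨γ, h1, h2, rfl⟩
    exact coupling_key (2 * A) μS μT hμS hμT g hgLip γ h1 h2
  have hr0 : (∫ p, ‖p.1 - p.2‖ ∂(μS.prod μT)) ∈ S := by
    refine ⟨μS.prod μT, ?_, ?_, rfl⟩
    · rw [Measure.map_fst_prod]; simp
    · rw [Measure.map_snd_prod]; simp
  have hW1 : W1 μS μT = sInf S := rfl
  rcases lt_trichotomy A 0 with hA | hA | hA
  · -- A < 0 : the space must be a subsingleton, all couplings have cost 0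
    have hsub : ∀ x y : EuclideanSpace ℝ (Fin d), x = y := by
      intro x y
      by_contra hxy
      have hpos : 0 < ‖x - y‖ := by
        rw [norm_pos_iff, sub_ne_zero]; exact hxy
      have h5 := hfLip x y
      nlinarith [abs_nonneg (f x - f y)]
    have hzero : ∀ p : EuclideanSpace ℝ (Fin d) × EuclideanSpace ℝ (Fin d),
        ‖p.1 - p.2‖ = (0 : ℝ) := by
      intro p; rw [hsub p.1 p.2]; simp
    have hSeq : S = {0} := by
      ext r
      constructor
      · rintro ⟨γ, h1, h2, rfl⟩
        simp only [Set.mem_singleton_iff]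
        rw [show (fun p : EuclideanSpace ℝ (Fin d) × EuclideanSpace ℝ (Fin d) => ‖p.1 - p.2‖)
          = fun _ => (0:ℝ) from funext hzero]
        simp
      · rintro rfl
        refine ⟨μS.prod μT, ?_, ?_, ?_⟩
        · rw [Measure.map_fst_prod]; simp
        · rw [Measure.map_snd_prod]; simp
        · rw [show (fun p : EuclideanSpace ℝ (Fin d) × EuclideanSpace ℝ (Fin d) => ‖p.1 - p.2‖)
            = fun _ => (0:ℝ) from funext hzero]
          simp
    rw [hW1, hSeq, csInf_singleton]
    have h6 := key 0 (by rw [hSeq]; rfl)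
    simpa using h6
  · -- A = 0
    have h6 := key _ hr0
    rw [hW1]
    rw [hA] at h6 ⊢
    simp only [mul_zero, zero_mul, add_zero] at h6 ⊢
    exact h6
  · -- A > 0
    have h2A : 0 < 2 * A := by linarith
    have hdiv : ((∫ x, g x ∂μT) - (∫ x, g x ∂μS)) / (2 * A) ≤ sInf S := by
      apply le_csInf ⟨_, hr0⟩
      intro b hb
      rw [div_le_iff₀ h2A]
      have h7 := key b hb
      linarith
    rw [div_le_iff₀ h2A] at hdiv
    rw [hW1]
    nlinarith
end

section
/- Let μ₀, μ₁, …, μ_N be probability measures on ℝ^d with finite first moments, f a labeling function and h a hypothesis such that x ↦ |h(x) − f(x)| is L-Lipschitz. Then ε_{μ_N}(h) ≤ ε_{μ₀}(h) + L · Σ_{k=0}^{N−1} W₁(μ_k, μ_{k+1}). -/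
open MeasureTheory

lemma step_bound {d : ℕ} (L : ℝ) (μ ν : Measure (EuclideanSpace ℝ (Fin d)))
    [IsProbabilityMeasure μ] [IsProbabilityMeasure ν]
    (hmμ : Integrable (fun x => ‖x‖) μ) (hmν : Integrable (fun x => ‖x‖) ν)
    (g : EuclideanSpace ℝ (Fin d) → ℝ)
    (hLip : ∀ x y, |g x - g y| ≤ L * ‖x - y‖) :
    ∫ x, g x ∂ν ≤ ∫ x, g x ∂μ + L * W1 μ ν := by
  set S := { r : ℝ | ∃ γ : Measure (EuclideanSpace ℝ (Fin d) × EuclideanSpace ℝ (Fin d)),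
    γ.map Prod.fst = μ ∧ γ.map Prod.snd = ν ∧ r = ∫ p, ‖p.1 - p.2‖ ∂γ } with hSdef
  have hW : W1 μ ν = sInf S := rfl
  have hne : S.Nonempty :=
    ⟨_, μ.prod ν, by simp [Measure.map_fst_prod], by simp [Measure.map_snd_prod], rfl⟩
  have hbdd : BddBelow S := by
    refine ⟨0, ?_⟩
    rintro r ⟨γ, -, -, hr⟩
    exact hr ▸ integral_nonneg fun p => norm_nonneg _
  rcases lt_or_ge L 0 with hL | hL
  · -- degenerate case: forces the space to be a subsingleton
    have hsub : ∀ x y : EuclideanSpace ℝ (Fin d), x = y := by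
      intro x y
      have h1 := hLip x y
      have h2 : (0:ℝ) ≤ L * ‖x - y‖ := le_trans (abs_nonneg _) h1
      have h3 : ‖x - y‖ ≤ 0 := by nlinarith [norm_nonneg (x - y)]
      have h4 : x - y = 0 := by rwa [← norm_le_zero_iff]
      exact sub_eq_zero.mp h4
    have hzero : (fun p : EuclideanSpace ℝ (Fin d) × EuclideanSpace ℝ (Fin d) => ‖p.1 - p.2‖)
        = fun _ => (0:ℝ) := funext fun p => by rw [hsub p.1 p.2, sub_self, norm_zero]
    have hSz : ∀ r ∈ S, r = 0 := by
      rintro r ⟨γ, -, -, hr⟩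
      rw [hr, hzero, integral_zero]
    have hS0 : sInf S = 0 := by
      refine le_antisymm ?_ (le_csInf hne fun s hs => (hSz s hs).ge)
      obtain ⟨r, hr⟩ := hne
      exact (hSz r hr) ▸ csInf_le hbdd hr
    have hg : g = fun _ => g 0 := funext fun x => by rw [hsub x 0]
    rw [hW, hS0, hg]
    simp
  · -- main case L ≥ 0
    have gLip : LipschitzWith (Real.toNNReal L) g := by
      apply LipschitzWith.of_dist_le_mul
      intro x y
      rw [Real.dist_eq, dist_eq_norm, Real.coe_toNNReal L hL]
      exact hLip x y
    have gcont : Continuous g := gLip.continuous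
    have gint : ∀ (ρ : Measure (EuclideanSpace ℝ (Fin d))) [IsProbabilityMeasure ρ],
        Integrable (fun x => ‖x‖) ρ → Integrable g ρ := by
      intro ρ _ hρ
      refine Integrable.mono' ((integrable_const |g 0|).add (hρ.const_mul L))
        gcont.aestronglyMeasurable ?_
      filter_upwards with x
      have h1 : |g x| - |g 0| ≤ |g x - g 0| := abs_sub_abs_le_abs_sub _ _
      have h2 : |g x - g 0| ≤ L * ‖x - 0‖ := hLip x 0
      rw [sub_zero] at h2
      show ‖g x‖ ≤ |g 0| + L * ‖x‖
      have : ‖g x‖ = |g x| := rfl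
      rw [this]
      linarith
    have key : ∀ r ∈ S, ∫ x, g x ∂ν - ∫ x, g x ∂μ ≤ L * r := by
      rintro r ⟨γ, hfst, hsnd, hr⟩
      have hγ : IsProbabilityMeasure γ := by
        constructor
        have := congrArg (fun m : Measure (EuclideanSpace ℝ (Fin d)) => m Set.univ) hfst
        simpa [Measure.map_apply measurable_fst MeasurableSet.univ] using this
      have hint1 : Integrable (fun p : EuclideanSpace ℝ (Fin d) × EuclideanSpace ℝ (Fin d) => g p.1) γ := by
        have : Integrable g (γ.map Prod.fst) := hfst ▸ gint μ hmμ
        exact (integrable_map_measure gcont.aestronglyMeasurable measurable_fst.aemeasurable).mp this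
      have hint2 : Integrable (fun p : EuclideanSpace ℝ (Fin d) × EuclideanSpace ℝ (Fin d) => g p.2) γ := by
        have : Integrable g (γ.map Prod.snd) := hsnd ▸ gint ν hmν
        exact (integrable_map_measure gcont.aestronglyMeasurable measurable_snd.aemeasurable).mp this
      have hnrm1 : Integrable (fun p : EuclideanSpace ℝ (Fin d) × EuclideanSpace ℝ (Fin d) => ‖p.1‖) γ := by
        have : Integrable (fun x => ‖x‖) (γ.map Prod.fst) := hfst ▸ hmμ
        exact (integrable_map_measure continuous_norm.aestronglyMeasurable
          measurable_fst.aemeasurable).mp this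
      have hnrm2 : Integrable (fun p : EuclideanSpace ℝ (Fin d) × EuclideanSpace ℝ (Fin d) => ‖p.2‖) γ := by
        have : Integrable (fun x => ‖x‖) (γ.map Prod.snd) := hsnd ▸ hmν
        exact (integrable_map_measure continuous_norm.aestronglyMeasurable
          measurable_snd.aemeasurable).mp this
      have hdist : Integrable (fun p : EuclideanSpace ℝ (Fin d) × EuclideanSpace ℝ (Fin d) => ‖p.1 - p.2‖) γ := by
        refine Integrable.mono' (hnrm1.add hnrm2)
          ((continuous_fst.sub continuous_snd).norm.aestronglyMeasurable) ?_
        filter_upwards with p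
        simpa using norm_sub_le p.1 p.2
      have e1 : ∫ x, g x ∂ν = ∫ p, g p.2 ∂γ := by
        rw [← hsnd, integral_map measurable_snd.aemeasurable gcont.aestronglyMeasurable]
      have e2 : ∫ x, g x ∂μ = ∫ p, g p.1 ∂γ := by
        rw [← hfst, integral_map measurable_fst.aemeasurable gcont.aestronglyMeasurable]
      rw [e1, e2, ← integral_sub hint2 hint1, hr, ← integral_const_mul]
      refine integral_mono (hint2.sub hint1) (hdist.const_mul L) ?_
      intro p
      calc g p.2 - g p.1 ≤ |g p.2 - g p.1| := le_abs_self _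
        _ ≤ L * ‖p.2 - p.1‖ := hLip _ _
        _ = L * ‖p.1 - p.2‖ := by rw [norm_sub_rev]
    rcases eq_or_lt_of_le hL with hL0 | hLpos
    · obtain ⟨r, hr⟩ := hne
      have hk := key r hr
      rw [← hL0] at hk ⊢
      simp only [zero_mul] at hk ⊢
      linarith
    · have hlb : (∫ x, g x ∂ν - ∫ x, g x ∂μ) / L ≤ sInf S := by
        refine le_csInf hne fun r hr => ?_
        rw [div_le_iff₀ hLpos]
        have := key r hr
        linarith [key r hr]
      have hmul := mul_le_mul_of_nonneg_left hlb hL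
      rw [mul_div_cancel₀ _ (ne_of_gt hLpos)] at hmul
      rw [hW]
      linarith

theorem chain_generalization_bound_W1 {d : ℕ} (L : ℝ) (N : ℕ)
    (μ : ℕ → Measure (EuclideanSpace ℝ (Fin d)))
    (hprob : ∀ k ≤ N, IsProbabilityMeasure (μ k))
    (hmom : ∀ k ≤ N, Integrable (fun x => ‖x‖) (μ k))
    (f h : EuclideanSpace ℝ (Fin d) → ℝ)
    (hLip : ∀ x y, |(|h x - f x| - |h y - f y|)| ≤ L * ‖x - y‖) :
    (∫ x, |h x - f x| ∂(μ N)) ≤ (∫ x, |h x - f x| ∂(μ 0))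
      + L * ∑ k ∈ Finset.range N, W1 (μ k) (μ (k + 1)) := by
  revert hprob hmom
  induction N with
  | zero => intro _ _; simp
  | succ n ih =>
    intro hprob hmom
    have h1 := ih (fun k hk => hprob k (hk.trans (Nat.le_succ n)))
      (fun k hk => hmom k (hk.trans (Nat.le_succ n)))
    haveI := hprob n (Nat.le_succ n)
    haveI := hprob (n + 1) le_rfl
    have h2 := step_bound L (μ n) (μ (n + 1)) (hmom n (Nat.le_succ n)) (hmom (n + 1) le_rfl)
      (fun x => |h x - f x|) hLip
    rw [Finset.sum_range_succ, mul_add]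
    linarith
end
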